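/- Let p be prime, q = (p^b)^r with r ≥ 2, and N = (q³+1)/(q+1). Then the numerical semigroup S generated by {q³ + 1 - iN - j : i,j ≥ 0, i + j ≤ p^b} has genus (q⁵ - q³p^b - q³ + q²)/(2p^b). -/

import Mathlib

open Finset

lemma div_unique' {B P Q e d : ℕ} (he : e < B) (hd : d < B)
    (h : P * B + e = Q * B + d) : P = Q ∧ e = d := by
  rcases lt_trichotomy P Q with hlt | heq | hgt
  · have h2 : P * B + B ≤ Q * B := by
      calc P * B + B = (P + 1) * B := by ring
      _ ≤ Q * B := Nat.mul_le_mul_right _ hlt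
    omega
  · subst heq; omega
  · have h2 : Q * B + B ≤ P * B := by
      calc Q * B + B = (Q + 1) * B := by ring
      _ ≤ P * B := Nat.mul_le_mul_right _ hgt
    omega

section main
variable (a q N : ℕ)

lemma gen_mem (ha : 1 ≤ a) (haq : a ≤ q) (hqN : q ≤ N) (i j : ℕ) (hij : i + j ≤ a) :
    ∃ g ∈ AddSubmonoid.closure {x : ℕ | ∃ i j : ℕ, i + j ≤ a ∧ x = (q+1)*N - i * N - j},
      g + i * N + j = (q+1)*N := by
  refine ⟨(q+1)*N - i * N - j, AddSubmonoid.subset_closure ⟨i, j, hij, rfl⟩, ?_⟩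
  have hiN : i * N ≤ q * N := Nat.mul_le_mul_right _ (by omega)
  have hle : i * N + j ≤ (q+1) * N := by
    have : (q+1) * N = q * N + N := by ring
    omega
  omega

lemma exists_sum (ha : 1 ≤ a) (haq : a ≤ q) (hqN : q ≤ N) :
    ∀ n I J : ℕ, I + J ≤ n * a →
      ∃ s ∈ AddSubmonoid.closure {x : ℕ | ∃ i j : ℕ, i + j ≤ a ∧ x = (q+1)*N - i * N - j},
        s + I * N + J = n * ((q+1)*N) := by
  intro n
  induction n with
  | zero => intro I J h; simp at h; exact ⟨0, AddSubmonoid.zero_mem _, by simp [h.1, h.2]⟩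
  | succ n ih =>
    intro I J hIJ
    have key : ∃ i j I' J', i + j ≤ a ∧ I' + J' ≤ n * a ∧ I = I' + i ∧ J = J' + j := by
      rcases le_or_gt a I with h1 | h1
      · exact ⟨a, 0, I - a, J, by omega, by
          have : (n+1) * a = n * a + a := by ring
          omega, by omega, by omega⟩
      · rcases le_or_gt a (I + J) with h2 | h2
        · exact ⟨I, a - I, 0, J - (a - I), by omega, by
            have : (n+1) * a = n * a + a := by ring
            omega, by omega, by omega⟩
        · exact ⟨I, J, 0, 0, by omega, by omega, by omega, by omega⟩
    obtain ⟨i, j, I', J', hij, hIJ', hI, hJ⟩ := key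
    obtain ⟨s, hs, hseq⟩ := ih I' J' hIJ'
    obtain ⟨g, hg, hgeq⟩ := gen_mem a q N ha haq hqN i j hij
    refine ⟨s + g, AddSubmonoid.add_mem _ hs hg, ?_⟩
    have h1 : (n+1) * ((q+1)*N) = n * ((q+1)*N) + (q+1)*N := by ring
    have h2 : I * N = I' * N + i * N := by rw [hI]; ring
    omega

lemma mem_iff (ha : 1 ≤ a) (haq : a ≤ q) (hqN : q ≤ N) (x : ℕ) :
    x ∈ AddSubmonoid.closure {x : ℕ | ∃ i j : ℕ, i + j ≤ a ∧ x = (q+1)*N - i * N - j}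
    ↔ ∃ n I J : ℕ, I + J ≤ n * a ∧ x + I * N + J = n * ((q+1)*N) := by
  constructor
  · intro hx
    induction hx using AddSubmonoid.closure_induction with
    | mem y hy =>
      obtain ⟨i, j, hij, rfl⟩ := hy
      obtain ⟨g, _, hgeq⟩ := gen_mem a q N ha haq hqN i j hij
      have hiN : i * N ≤ q * N := Nat.mul_le_mul_right _ (by omega)
      have hle : i * N + j ≤ (q+1) * N := by
        have : (q+1) * N = q * N + N := by ring
        omega
      exact ⟨1, i, j, by omega, by omega⟩
    | zero => exact ⟨0, 0, 0, by omega, by omega⟩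
    | add y z hy hz ihy ihz =>
      obtain ⟨n1, I1, J1, h1, e1⟩ := ihy
      obtain ⟨n2, I2, J2, h2, e2⟩ := ihz
      refine ⟨n1 + n2, I1 + I2, J1 + J2, ?_, ?_⟩
      · have : (n1 + n2) * a = n1 * a + n2 * a := by ring
        omega
      · have h3 : (I1 + I2) * N = I1 * N + I2 * N := by ring
        have h4 : (n1 + n2) * ((q+1)*N) = n1 * ((q+1)*N) + n2 * ((q+1)*N) := by ring
        omega
  · rintro ⟨n, I, J, h1, h2⟩
    obtain ⟨s, hs, hseq⟩ := exists_sum a q N ha haq hqN n I J h1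
    have : s = x := by omega
    rwa [this] at hs

lemma gap_iff (ha : 1 ≤ a) (haq : a ≤ q) (hqN : q ≤ N) (hN1 : 1 ≤ N) (x : ℕ) :
    x ∉ AddSubmonoid.closure {x : ℕ | ∃ i j : ℕ, i + j ≤ a ∧ x = (q+1)*N - i * N - j}
    ↔ ∃ u v d : ℕ, 1 ≤ u ∧ v ≤ q ∧ d < N ∧ u * a < v + d ∧
        x + v * N + d = u * ((q+1)*N) := by
  constructor
  · intro hx
    have hx0 : x ≠ 0 := by
      rintro rfl
      exact hx (AddSubmonoid.zero_mem _)
    obtain ⟨D, R, hdm, hRN⟩ : ∃ D R : ℕ, N * D + R = x - 1 ∧ R < N :=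
      ⟨_, _, Nat.div_add_mod _ _, Nat.mod_lt _ (by omega)⟩
    obtain ⟨D', R', hdm', hR'⟩ : ∃ D' R' : ℕ, (q+1) * D' + R' = D ∧ R' < q + 1 :=
      ⟨_, _, Nat.div_add_mod _ _, Nat.mod_lt _ (by omega)⟩
    -- u = D'+1, v = q - R', d = N-1-R
    have heq : x + (q - R') * N + (N - 1 - R) = (D' + 1) * ((q+1)*N) := by
      have h1 : (D' + 1) * ((q+1)*N) = (q+1) * D' * N + q * N + N := by ring
      have h2 : (q - R') * N + R' * N = q * N := by
        have : (q - R' + R') * N = q * N := by rw [Nat.sub_add_cancel (by omega)]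
        linarith [this, Nat.add_mul (q - R') R' N]
      have h3 : (q+1) * D' * N + R' * N = D * N := by
        have := congrArg (· * N) hdm'
        simpa [Nat.add_mul] using this
      have h4 : N * D = D * N := Nat.mul_comm _ _
      omega
    refine ⟨D' + 1, q - R', N - 1 - R, by omega, by omega, by omega, ?_, heq⟩
    by_contra hle
    push_neg at hle
    exact hx ((mem_iff a q N ha haq hqN x).2 ⟨D' + 1, q - R', N - 1 - R, by omega, heq⟩)
  · rintro ⟨u, v, d, hu1, hvq, hdN, hvd, heq⟩ hx
    obtain ⟨n, I, J, hIJ, heq2⟩ := (mem_iff a q N ha haq hqN x).1 hx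
    obtain ⟨t, e, hdm, heN⟩ : ∃ t e : ℕ, N * t + e = J ∧ e < N :=
      ⟨_, _, Nat.div_add_mod _ _, Nat.mod_lt _ (by omega)⟩
    have heq3 : x + (I + t) * N + e = n * ((q+1)*N) := by
      have : (I + t) * N = I * N + N * t := by ring
      omega
    have hPQ : (v + n * (q+1)) * N + d = ((I + t) + u * (q+1)) * N + e := by
      have h1 : (v + n * (q+1)) * N = v * N + n * ((q+1)*N) := by ring
      have h2 : ((I + t) + u * (q+1)) * N = (I + t) * N + u * ((q+1)*N) := by ring
      omega
    obtain ⟨hP, hde⟩ := div_unique' hdN heN hPQ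
    have hun : u ≤ n := by
      by_contra hnu
      push_neg at hnu
      have h2 : (n + 1) * (q + 1) ≤ u * (q+1) := Nat.mul_le_mul_right _ hnu
      have h3 : (n+1) * (q+1) = n * (q+1) + (q+1) := by ring
      omega
    have htN : t ≤ N * t := Nat.le_mul_of_pos_left t (by omega)
    have key : ((n : ℤ) - u) * ((q : ℤ) + 1 - a) ≥ 0 := by
      apply mul_nonneg
      · simp only [sub_nonneg]; exact_mod_cast hun
      · have : a ≤ q + 1 := by omega
        push_cast
        omega
    have hP' : (v : ℤ) + n * (q+1) = (I + t) + u * (q+1) := by exact_mod_cast hP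
    have hIJ' : (I : ℤ) + J ≤ n * a := by exact_mod_cast hIJ
    have hvd' : (u : ℤ) * a < v + d := by exact_mod_cast hvd
    have hdm' : (N : ℤ) * t + e = J := by exact_mod_cast hdm
    have htN' : (t : ℤ) ≤ N * t := by exact_mod_cast htN
    have hde' : (d : ℤ) = e := by exact_mod_cast hde
    nlinarith [key, hP', hIJ', hvd', hdm', htN', hde']

end main

lemma Gsplit (a : ℕ) : ∀ c x : ℕ,
    (∑ m ∈ range (c + x), m / a) = (∑ m ∈ range c, m / a) + ∑ i ∈ range x, (c + i) / a := by
  intro c x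
  induction x with
  | zero => simp
  | succ x ih =>
    rw [← Nat.add_assoc, Finset.sum_range_succ, ih, Finset.sum_range_succ]
    ring

lemma Gsum (a : ℕ) (ha : 0 < a) : ∀ k : ℕ,
    2 * (∑ m ∈ range (a * k), m / a) + a * k = a * k * k := by
  intro k
  induction k with
  | zero => simp
  | succ k ih =>
    have h1 : a * (k+1) = a * k + a := by ring
    rw [h1, Gsplit]
    have h2 : ∑ i ∈ range a, (a * k + i) / a = a * k := by
      have hc : ∀ i ∈ range a, (a * k + i) / a = k := by
        intro i hi
        simp only [mem_range] at hi
        rw [Nat.mul_add_div ha, Nat.div_eq_of_lt hi]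
        omega
      rw [Finset.sum_congr rfl hc, Finset.sum_const, card_range, smul_eq_mul]
    have h3 : (a * k + a) * (k+1) = a * k * k + 2 * (a * k) + a := by ring
    omega

lemma Gshift (a k : ℕ) (ha : 0 < a) (x : ℕ) :
    (∑ m ∈ range (a * k + x), m / a)
      = (∑ m ∈ range (a * k), m / a) + x * k + ∑ m ∈ range x, m / a := by
  rw [Gsplit]
  have hc : ∀ i ∈ range x, (a * k + i) / a = k + i / a := by
    intro i _
    rw [Nat.mul_add_div ha]
  rw [Finset.sum_congr rfl hc, Finset.sum_add_distrib, Finset.sum_const, card_range, smul_eq_mul]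
  ring

theorem part1 (a q N : ℕ) (ha : 1 ≤ a) (haq : a ≤ q)
    (hNval : N + q = q * q + 1) (hqN : q ≤ N) (hN1 : 1 ≤ N)
    (S : AddSubmonoid ℕ)
    (hS : S = AddSubmonoid.closure
      {x : ℕ | ∃ i j : ℕ, i + j ≤ a ∧ x = (q+1)*N - i * N - j}) :
    ({n : ℕ | n ∉ S}).ncard
      = ∑ v ∈ range (q+1), ∑ d ∈ range N, (v + d - 1) / a := by
  classical
  set F : Finset (ℕ×ℕ×ℕ) := (Finset.Icc 1 (q*q) ×ˢ Finset.range (q+1) ×ˢ Finset.range N).filter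
      (fun t => t.1 * a < t.2.1 + t.2.2) with hF
  set φ : ℕ×ℕ×ℕ → ℕ := fun t => t.1 * ((q+1)*N) - t.2.1 * N - t.2.2 with hφ
  -- basic equation helper
  have hsub : ∀ u v d : ℕ, 1 ≤ u → v ≤ q → d < N → φ (u, v, d) + v * N + d = u * ((q+1)*N) := by
    intro u v d hu hv hd
    have h1 : v * N ≤ q * N := Nat.mul_le_mul_right _ hv
    have h2 : (q+1) * N ≤ u * ((q+1)*N) := Nat.le_mul_of_pos_left _ (by omega)
    have h3 : (q+1) * N = q * N + N := by ring
    simp only [hφ]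
    omega
  have hmemF : ∀ u v d : ℕ, (u, v, d) ∈ F ↔
      (1 ≤ u ∧ u ≤ q*q ∧ v < q+1 ∧ d < N ∧ u * a < v + d) := by
    intro u v d
    simp [hF, Finset.mem_filter, Finset.mem_product, Finset.mem_Icc, Finset.mem_range]
    tauto
  have himg : {n : ℕ | n ∉ S} = φ '' (F : Set (ℕ×ℕ×ℕ)) := by
    ext x
    simp only [Set.mem_setOf_eq, Set.mem_image, Finset.mem_coe, hS]
    rw [gap_iff a q N ha haq hqN hN1 x]
    constructor
    · rintro ⟨u, v, d, hu, hv, hd, hvd, heq⟩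
      refine ⟨(u, v, d), (hmemF u v d).2 ⟨hu, ?_, by omega, hd, hvd⟩, ?_⟩
      · have h1 : u ≤ u * a := Nat.le_mul_of_pos_right _ (by omega)
        omega
      · have := hsub u v d hu hv hd
        omega
    · rintro ⟨⟨u, v, d⟩, htF, rfl⟩
      obtain ⟨hu, _, hv, hd, hvd⟩ := (hmemF u v d).1 htF
      exact ⟨u, v, d, hu, by omega, hd, hvd, hsub u v d hu (by omega) hd⟩
  have hinj : Set.InjOn φ (F : Set (ℕ×ℕ×ℕ)) := by
    rintro ⟨u1, v1, d1⟩ h1 ⟨u2, v2, d2⟩ h2 heq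
    simp only [Finset.mem_coe] at h1 h2
    obtain ⟨hu1, _, hv1, hd1, _⟩ := (hmemF u1 v1 d1).1 h1
    obtain ⟨hu2, _, hv2, hd2, _⟩ := (hmemF u2 v2 d2).1 h2
    have e1 := hsub u1 v1 d1 hu1 (by omega) hd1
    have e2 := hsub u2 v2 d2 hu2 (by omega) hd2
    rw [heq] at e1
    have hPQ : (v1 + u2 * (q+1)) * N + d1 = (v2 + u1 * (q+1)) * N + d2 := by
      have g1 : (v1 + u2 * (q+1)) * N = v1 * N + u2 * ((q+1)*N) := by ring
      have g2 : (v2 + u1 * (q+1)) * N = v2 * N + u1 * ((q+1)*N) := by ring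
      omega
    obtain ⟨hP, hd⟩ := div_unique' hd1 hd2 hPQ
    have hPQ2 : u2 * (q+1) + v1 = u1 * (q+1) + v2 := by omega
    obtain ⟨hu, hv⟩ := div_unique' (by omega : v1 < q+1) (by omega : v2 < q+1) hPQ2
    simp_all
  rw [himg, Set.ncard_image_of_injOn hinj, Set.ncard_coe_finset]
  -- card computation
  have hfib : F.card = ∑ w ∈ Finset.range (q+1) ×ˢ Finset.range N,
      (F.filter (fun t => t.2 = w)).card := by
    apply Finset.card_eq_sum_card_fiberwise
    rintro ⟨u, v, d⟩ ht
    obtain ⟨_, _, hv, hd, _⟩ := (hmemF u v d).1 ht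
    simp [Finset.mem_product, hv, hd]
  rw [hfib]
  have hw : ∀ w ∈ Finset.range (q+1) ×ˢ Finset.range N,
      (F.filter (fun t => t.2 = w)).card = (w.1 + w.2 - 1) / a := by
    rintro ⟨v, d⟩ hw
    simp only [Finset.mem_product, Finset.mem_range] at hw
    dsimp only
    have himg2 : F.filter (fun t => t.2 = (v, d))
        = ((Finset.Icc 1 ((v + d - 1)/a)).image (fun u => (u, v, d))) := by
      ext ⟨u, v', d'⟩
      simp only [Finset.mem_filter, Finset.mem_image, Finset.mem_Icc, Prod.mk.injEq]
      constructor
      · rintro ⟨htF, hv', hd'⟩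
        subst hv' hd'
        obtain ⟨hu, huq, _, _, hvd⟩ := (hmemF _ _ _).1 htF
        refine ⟨u, ⟨hu, ?_⟩, rfl, rfl, rfl⟩
        rw [Nat.le_div_iff_mul_le (by omega : 0 < a)]
        omega
      · rintro ⟨u', ⟨hu1, hu2⟩, rfl, rfl, rfl⟩
        rw [Nat.le_div_iff_mul_le (by omega : 0 < a)] at hu2
        have hus : u' ≤ v + d - 1 := le_trans (Nat.le_mul_of_pos_right _ (by omega)) hu2
        exact ⟨(hmemF u' v d).2 ⟨hu1, by omega, by omega, by omega, by omega⟩, rfl, rfl⟩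
    rw [himg2, Finset.card_image_of_injective _ (by intro x y h; simpa using h),
      Nat.card_Icc]
    simp
  rw [Finset.sum_congr rfl hw, Finset.sum_product]

theorem part2 (a q N mm : ℕ) (ha : 1 ≤ a) (hq2 : 2 ≤ q) (hm : q = a * mm)
    (hNval : N + q = q * q + 1) (hN1 : 1 ≤ N) :
    ((∑ v ∈ range (q+1), ∑ d ∈ range N, (v + d - 1) / a : ℕ) : ℚ)
      = ((q:ℚ)^5 - q^3*a - q^3 + q^2)/(2*a) := by
  have ha0 : 0 < a := ha
  have hqq : q ≤ q * q := Nat.le_mul_of_pos_left q (by omega)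
  set K := mm * (q - 1) with hK
  have haK : a * K + q = q * q := by
    have h1 : a * (mm * (q-1)) = (a * mm) * (q-1) := by ring
    have h2 : q * (q - 1) + q = q * q := by
      have h3 : q - 1 + 1 = q := by omega
      calc q * (q-1) + q = q * ((q-1) + 1) := by ring
      _ = q * q := by rw [h3]
    rw [hK, h1, ← hm]
    exact h2
  have haK2 : a * K + 1 = N := by omega
  -- outer split
  rw [Finset.sum_range_succ']
  -- f 0
  have h0 : ∑ d ∈ range N, (0 + d - 1)/a = ∑ x ∈ range (a*K), x/a := by
    have hNsplit : N = (a*K) + 1 := by omega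
    rw [hNsplit, Finset.sum_range_succ']
    have hc : ∀ d ∈ range (a*K), (0 + (d+1) - 1)/a = d/a := by
      intro d _
      congr 1
      omega
    simp [Finset.sum_congr rfl hc]
  -- f (i+1)
  have h1 : ∀ i ∈ range q, (∑ d ∈ range N, ((i+1) + d - 1)/a)
      = ∑ d ∈ range N, (i + d)/a := by
    intro i _
    apply Finset.sum_congr rfl
    intro d _
    congr 1
    omega
  rw [h0, Finset.sum_congr rfl h1]
  -- inner identity
  have hInner : ∀ i, (∑ x ∈ range i, x/a) + ∑ d ∈ range N, (i + d)/a
      = (∑ x ∈ range (a*K), x/a) + (i+1)*K + ∑ x ∈ range (i+1), x/a := by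
    intro i
    have g1 := Gsplit a i N
    have g2 : i + N = a*K + (i+1) := by omega
    rw [g2] at g1
    have g3 := Gshift a K ha0 (i+1)
    omega
  have hsum : (∑ i ∈ range q, ((∑ x ∈ range i, x/a) + ∑ d ∈ range N, (i + d)/a))
      = ∑ i ∈ range q, ((∑ x ∈ range (a*K), x/a) + (i+1)*K + ∑ x ∈ range (i+1), x/a) :=
    Finset.sum_congr rfl (fun i _ => hInner i)
  rw [Finset.sum_add_distrib] at hsum
  rw [Finset.sum_add_distrib, Finset.sum_add_distrib, Finset.sum_const, card_range,
    smul_eq_mul, ← Finset.sum_mul] at hsum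
  have htel : ∑ i ∈ range q, (∑ x ∈ range (i+1), x/a)
      = (∑ i ∈ range q, ∑ x ∈ range i, x/a) + ∑ x ∈ range q, x/a := by
    have t1 := Finset.sum_range_succ (fun i => ∑ x ∈ range i, x/a) q
    have t2 := Finset.sum_range_succ' (fun i => ∑ x ∈ range i, x/a) q
    simp only [range_zero, Finset.sum_empty, add_zero] at t2
    omega
  have hS2 : 2 * (∑ i ∈ range q, (i+1)) = q*q + q := by
    have t2 := Finset.sum_range_succ' (fun i => i) q
    have hg := Finset.sum_range_id_mul_two (q+1)
    have he : (q+1) * (q+1-1) = q*q + q := by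
      have h3 : q+1-1 = q := rfl
      rw [h3]; ring
    omega
  -- main equation in ℕ
  have F6 : (∑ i ∈ range q, ∑ d ∈ range N, (i + d)/a) + (∑ x ∈ range (a*K), x/a)
      = (q+1) * (∑ x ∈ range (a*K), x/a) + (∑ i ∈ range q, (i+1)) * K
        + ∑ x ∈ range q, x/a := by
    have he : (q+1) * (∑ x ∈ range (a*K), x/a)
        = q * (∑ x ∈ range (a*K), x/a) + (∑ x ∈ range (a*K), x/a) := by ring
    omega
  have F1 := Gsum a ha0 K
  have F2 : 2 * (∑ x ∈ range q, x/a) + q = q * mm := by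
    have := Gsum a ha0 mm
    rw [← hm] at this
    have he : q * mm = a * mm * mm := by rw [hm]
    omega
  -- pass to ℚ
  set G1 := ∑ x ∈ range (a*K), x/a with hG1d
  set Gq := ∑ x ∈ range q, x/a with hGqd
  set S2 := ∑ i ∈ range q, (i+1) with hS2d
  have hKQ : (a:ℚ) * K = q*q - q := by
    have h : ((a * K : ℕ) : ℚ) + (q:ℚ) = (q:ℚ) * (q:ℚ) := by exact_mod_cast haK
    push_cast at h
    linarith
  have hmQ : (a:ℚ) * mm = q := by exact_mod_cast hm.symm
  have hG1 : 2 * (G1:ℚ) = (q*q - q) * K - (q*q - q) := by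
    have f1 : 2 * (G1:ℚ) + a*K = a*K*K := by exact_mod_cast F1
    linear_combination f1 + ((K:ℚ) - 1) * hKQ
  have hGq : 2 * (Gq:ℚ) = q * mm - q := by
    have f2 : 2 * (Gq:ℚ) + q = q * mm := by exact_mod_cast F2
    linarith
  have hS2Q : 2 * (S2:ℚ) = q*q + q := by exact_mod_cast hS2
  have F6Q : ((∑ i ∈ range q, ∑ d ∈ range N, (i + d)/a : ℕ) : ℚ)
      = (q+1) * G1 + S2 * K + Gq - G1 := by
    have := F6
    have f6 : ((∑ i ∈ range q, ∑ d ∈ range N, (i + d)/a : ℕ) : ℚ) + G1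
        = (q+1) * G1 + S2 * K + Gq := by exact_mod_cast this
    linarith
  push_cast [F6Q]
  rw [eq_div_iff (by positivity : (2:ℚ) * a ≠ 0)]
  linear_combination (a*((q:ℚ)+1)) * hG1 + ((a:ℚ)*K) * hS2Q + (a:ℚ) * hGq
    + ((q:ℚ)*q + q + ((q:ℚ)+1)*((q:ℚ)*q - q)) * hKQ + (q:ℚ) * hmQ

lemma keylemma (q c : ℕ) (hc : q * q = c + q) : (q+1) * (c + 1) = q^3 + 1 := by
  have h1 : (q+1) * (c + 1) = q * c + c + q + 1 := by ring
  have h2 : q * (c + q) = q * c + q * q := by ring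
  have h3 : q ^ 3 = q * (q * q) := by ring
  rw [hc] at h3
  omega

theorem stmt_2 (p b r : ℕ) (hp : p.Prime) (hb : 0 < b) (hr : 2 ≤ r)
    (q N : ℕ) (hq : q = (p ^ b) ^ r) (hN : N = (q ^ 3 + 1) / (q + 1))
    (S : AddSubmonoid ℕ)
    (hS : S = AddSubmonoid.closure
      {x : ℕ | ∃ i j : ℕ, i + j ≤ p ^ b ∧ x = q ^ 3 + 1 - i * N - j}) :
    (({n : ℕ | n ∉ S}).ncard : ℚ) =
      ((q : ℚ) ^ 5 - q ^ 3 * p ^ b - q ^ 3 + q ^ 2) / (2 * p ^ b) := by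
  have ha2 : 2 ≤ p ^ b := le_trans hp.two_le (Nat.le_self_pow hb.ne' p)
  have ha1 : 1 ≤ p ^ b := by omega
  have hdvd : p ^ b ∣ q := hq ▸ dvd_pow_self (p ^ b) (by omega : r ≠ 0)
  have haq : p ^ b ≤ q := hq ▸ Nat.le_self_pow (by omega) (p ^ b)
  have hq2 : 2 ≤ q := le_trans ha2 haq
  have hqq : q ≤ q * q := Nat.le_mul_of_pos_left q (by omega)
  obtain ⟨c, hc⟩ : ∃ c, q * q = c + q := ⟨q*q - q, by omega⟩
  have hkey : (q+1) * (c + 1) = q^3 + 1 := keylemma q c hc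
  have hNval' : N = c + 1 := by
    rw [hN, ← hkey, Nat.mul_div_cancel_left _ (by omega : 0 < q + 1)]
  have hNval : N + q = q*q + 1 := by omega
  have hN1 : 1 ≤ N := by omega
  have hqq2 : 2 * q ≤ q * q := Nat.mul_le_mul_right q hq2
  have hqN : q ≤ N := by omega
  have hM : q^3 + 1 = (q+1) * N := by rw [hNval']; exact hkey.symm
  have hSset : {x : ℕ | ∃ i j : ℕ, i + j ≤ p ^ b ∧ x = q ^ 3 + 1 - i * N - j}
      = {x : ℕ | ∃ i j : ℕ, i + j ≤ p ^ b ∧ x = (q+1)*N - i * N - j} := by rw [hM]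
  rw [hSset] at hS
  obtain ⟨mm, hm⟩ := hdvd
  rw [part1 (p ^ b) q N ha1 haq hNval hqN hN1 S hS,
    part2 (p ^ b) q N mm ha1 hq2 hm hNval hN1]
  push_cast
  ring
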